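/- Let F and G be first-order sentences without equality such that F ⊨ G. Let F_c and G_c be clausal formulas with variable sets ū = var(F_c) and v̄ = var(G_c), and let f_c and g_c be disjoint sets of function symbols (Skolem functions) such that: f_c does not occur in G, G_c, or F; g_c does not occur in F, F_c, or G; fun(F_c) ⊆ fun(F) ∪ f_c and fun(G_c) ⊆ fun(G) ∪ g_c; pred(F_c) ⊆ pred(F) and pred(¬G_c) ⊆ pred(G); F is equivalent to ∃f_c ∀ū F_c and ¬G is equivalent to ∃g_c ∀v̄ G_c, where these second-order quantifications are interpreted semantically via expansions of structures. Let k be a constant occurring in none of F, G, F_c, G_c, and define f := fun(F_c) \ fun(G_c) and g := (fun(G_c) \ fun(F_c)) ∪ {k}. Let F_b (respectively G_b) be a conjunction of ground instances of clauses of F_c (respectively G_c) in which all terms are ground terms built from k and the function symbols occurring in F_c or G_c, and let H_b be a ground formula with F_b ⊨ H_b, H_b ⊨ ¬G_b, and lit(H_b) ⊆ lit(F_b) ∩ lit(¬G_b). Call a term an f-term (g-term) if its outermost function symbol is in f (in g). Let θ be an injective mapping from fresh variables to the set of those f-terms and g-terms that occur in H_b at a position not strictly inside another f-term or g-term, and let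 H_q be the result of replacing in H_b every such occurrence of a term t in the range of θ by the variable that θ maps to t. Let z₁,…,zₙ be the variables of H_q ordered so that i < j whenever θ(zᵢ) is a strict subterm of θ(zⱼ), and for each i let Qᵢ := ∀ if θ(zᵢ) is a g-term and Qᵢ := ∃ if θ(zᵢ) is an f-term. Then Q₁z₁…Qₙzₙ H_q is a Craig-Lyndon interpolant of F and G. -/

import Mathlib

namespace CTI

/-- Terms of first-order logic: variables and function applications.
Function symbols with empty argument lists play the role of constants. -/
inductive Tm : Type where
  | var : ℕ → Tm
  | fn  : ℕ → List Tm → Tm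

/-- The variables occurring in a term. -/
def Tm.vars : Tm → List ℕ
  | .var x => [x]
  | .fn _ ts => (ts.attach.map (fun t => Tm.vars t.1)).flatten
decreasing_by
  have h := List.sizeOf_lt_of_mem t.2; simp_wf; omega

/-- The function symbols occurring in a term. -/
def Tm.funs : Tm → List ℕ
  | .var _ => []
  | .fn f ts => f :: (ts.attach.map (fun t => Tm.funs t.1)).flatten
decreasing_by
  have h := List.sizeOf_lt_of_mem t.2; simp_wf; omega

/-- A term is ground iff it contains no variables. -/
def Tm.ground (t : Tm) : Prop := t.vars = []

/-- An interpretation (structure) over domain `D`. -/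
structure Interp (D : Type) where
  fn : ℕ → List D → D
  pr : ℕ → List D → Prop

/-- Evaluation of a term under an interpretation and a variable assignment. -/
def Tm.eval {D : Type} (I : Interp D) (a : ℕ → D) : Tm → D
  | .var x => a x
  | .fn f ts => I.fn f (ts.attach.map (fun t => Tm.eval I a t.1))
decreasing_by
  have h := List.sizeOf_lt_of_mem t.2; simp_wf; omega

/-- Formulas of first-order logic without equality. -/
inductive Fml : Type where
  | tru : Fml
  | fls : Fml
  | atom : ℕ → List Tm → Fml
  | neg : Fml → Fml
  | and : Fml → Fml → Fml
  | or : Fml → Fml → Fml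
  | all : ℕ → Fml → Fml
  | ex : ℕ → Fml → Fml

/-- Satisfaction of a formula under an interpretation and an assignment. -/
def Fml.holds {D : Type} (I : Interp D) : (ℕ → D) → Fml → Prop
  | _, .tru => True
  | _, .fls => False
  | a, .atom p ts => I.pr p (ts.map (Tm.eval I a))
  | a, .neg F => ¬ Fml.holds I a F
  | a, .and F G => Fml.holds I a F ∧ Fml.holds I a G
  | a, .or F G => Fml.holds I a F ∨ Fml.holds I a G
  | a, .all x F => ∀ d : D, Fml.holds I (Function.update a x d) F
  | a, .ex x F => ∃ d : D, Fml.holds I (Function.update a x d) F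

/-- Semantic entailment: every structure (with nonempty domain) and assignment
satisfying `F` satisfies `G`. -/
def Entails (F G : Fml) : Prop :=
  ∀ (D : Type) (_ : Nonempty D) (I : Interp D) (a : ℕ → D), F.holds I a → G.holds I a

/-- Semantic equivalence. -/
def EquivF (F G : Fml) : Prop := Entails F G ∧ Entails G F

/-- The atoms occurring in a formula, together with a polarity, relative to
the polarity `pol` of the context (`true` = positive). -/
def Fml.litsP : Bool → Fml → Set (Bool × ℕ × List Tm)
  | _, .tru => ∅
  | _, .fls => ∅
  | pol, .atom p ts => {(pol, p, ts)}
  | pol, .neg F => Fml.litsP (!pol) F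
  | pol, .and F G => Fml.litsP pol F ∪ Fml.litsP pol G
  | pol, .or F G => Fml.litsP pol F ∪ Fml.litsP pol G
  | pol, .all _ F => Fml.litsP pol F
  | pol, .ex _ F => Fml.litsP pol F

/-- lit(F): the set of pairs of an atom together with a polarity such that
the atom occurs in `F` with that polarity. -/
def Fml.lits (F : Fml) : Set (Bool × ℕ × List Tm) := Fml.litsP true F

/-- pred(F): predicates together with polarities of their occurrences. -/
def Fml.preds (F : Fml) : Set (Bool × ℕ) := {bp | ∃ ts, (bp.1, bp.2, ts) ∈ F.lits}

/-- The predicate symbols occurring in a formula (irrespective of polarity). -/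
def Fml.predSyms (F : Fml) : Set ℕ := {p | ∃ b ts, (b, p, ts) ∈ F.lits}

/-- fun(F): the function symbols (including constants) occurring in `F`. -/
def Fml.funs : Fml → Set ℕ
  | .tru => ∅
  | .fls => ∅
  | .atom _ ts => {f | ∃ t ∈ ts, f ∈ Tm.funs t}
  | .neg F => F.funs
  | .and F G => F.funs ∪ G.funs
  | .or F G => F.funs ∪ G.funs
  | .all _ F => F.funs
  | .ex _ F => F.funs

/-- The free variables of a formula. -/
def Fml.fv : Fml → Set ℕ
  | .tru => ∅
  | .fls => ∅
  | .atom _ ts => {x | ∃ t ∈ ts, x ∈ Tm.vars t}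
  | .neg F => F.fv
  | .and F G => F.fv ∪ G.fv
  | .or F G => F.fv ∪ G.fv
  | .all x F => F.fv \ {x}
  | .ex x F => F.fv \ {x}

/-- The variables occurring bound in a formula. -/
def Fml.bv : Fml → Set ℕ
  | .tru => ∅
  | .fls => ∅
  | .atom _ _ => ∅
  | .neg F => F.bv
  | .and F G => F.bv ∪ G.bv
  | .or F G => F.bv ∪ G.bv
  | .all x F => insert x F.bv
  | .ex x F => insert x F.bv

/-- All variables occurring in a formula (free or bound). -/
def Fml.varsSet : Fml → Set ℕ
  | .tru => ∅
  | .fls => ∅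
  | .atom _ ts => {x | ∃ t ∈ ts, x ∈ Tm.vars t}
  | .neg F => F.varsSet
  | .and F G => F.varsSet ∪ G.varsSet
  | .or F G => F.varsSet ∪ G.varsSet
  | .all x F => insert x F.varsSet
  | .ex x F => insert x F.varsSet

/-- Quantifier-free formulas. -/
def Fml.qfree : Fml → Prop
  | .tru => True
  | .fls => True
  | .atom _ _ => True
  | .neg F => F.qfree
  | .and F G => F.qfree ∧ G.qfree
  | .or F G => F.qfree ∧ G.qfree
  | .all _ _ => False
  | .ex _ _ => False

/-- Ground formulas: quantifier-free and without variables. -/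
def Fml.isGround : Fml → Prop
  | .tru => True
  | .fls => True
  | .atom _ ts => ∀ t ∈ ts, Tm.vars t = []
  | .neg F => F.isGround
  | .and F G => F.isGround ∧ G.isGround
  | .or F G => F.isGround ∧ G.isGround
  | .all _ _ => False
  | .ex _ _ => False

end CTI
namespace CTI

/-! ### Literals, clauses, clausal formulas -/

/-- A literal: a polarity (`true` = positive atom, `false` = negated atom),
a predicate symbol and an argument list. -/
abbrev Lit := Bool × ℕ × List Tm

/-- A clause: a finite disjunction of literals, as a list. -/
abbrev Clause := List Lit

/-- A clausal formula: a finite conjunction of clauses, as a list. -/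
abbrev CForm := List Clause

/-- The complement of a literal. -/
def litCompl (l : Lit) : Lit := (!l.1, l.2.1, l.2.2)

/-- The formula corresponding to a literal. -/
def litFml (l : Lit) : Fml := if l.1 then .atom l.2.1 l.2.2 else .neg (.atom l.2.1 l.2.2)

/-- The formula corresponding to a clause (disjunction of its literals). -/
def clauseFml (C : Clause) : Fml := C.foldr (fun l F => .or (litFml l) F) .fls

/-- The formula corresponding to a clausal formula (conjunction of its clauses). -/
def cformFml (cs : CForm) : Fml := cs.foldr (fun C F => .and (clauseFml C) F) .tru

def litGround (l : Lit) : Prop := ∀ t ∈ l.2.2, Tm.vars t = []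
def clauseGround (C : Clause) : Prop := ∀ l ∈ C, litGround l
def cformGround (cs : CForm) : Prop := ∀ C ∈ cs, clauseGround C

/-- The function symbols occurring in a clausal formula. -/
def cformFuns (cs : CForm) : Set ℕ := {f | ∃ C ∈ cs, ∃ l ∈ C, ∃ t ∈ l.2.2, f ∈ Tm.funs t}

/-- Application of a substitution to a term. -/
def Tm.applySub (σ : ℕ → Tm) : Tm → Tm
  | .var x => σ x
  | .fn f ts => .fn f (ts.attach.map (fun t => Tm.applySub σ t.1))
decreasing_by
  have h := List.sizeOf_lt_of_mem t.2; simp_wf; omega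

/-- Application of a substitution to a literal. -/
def litSub (σ : ℕ → Tm) (l : Lit) : Lit := (l.1, l.2.1, l.2.2.map (Tm.applySub σ))

/-- `C` is a substitution instance of the clause `D`. -/
def instClause (C D : Clause) : Prop := ∃ σ : ℕ → Tm, C = D.map (litSub σ)

/-- The subterm relation: `Subt s t` iff `s` occurs as a subterm of `t`. -/
inductive Subt : Tm → Tm → Prop
  | refl (t) : Subt t t
  | step {s u} (f : ℕ) (ts : List Tm) : u ∈ ts → Subt s u → Subt s (.fn f ts)

/-- Strict subterm relation. -/
def StrictSubt (s t : Tm) : Prop := Subt s t ∧ s ≠ t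

/-- `Tm.builtFrom S C t`: `t` is a ground term built from function symbols in `S`,
where the symbols in `C` may additionally be used as constants. -/
inductive Tm.builtFrom (S C : Set ℕ) : Tm → Prop
  | app {f : ℕ} {ts : List Tm} : f ∈ S → (∀ t ∈ ts, Tm.builtFrom S C t) →
      Tm.builtFrom S C (.fn f ts)
  | cst {c : ℕ} : c ∈ C → Tm.builtFrom S C (.fn c [])

/-! ### Clausal tableaux -/

/-- A node of a clausal tableau: a literal label, a side label
(`true` = red/left, `false` = blue/right; ignored for one-sided tableaux)
and the list of children in left-to-right order.  A whole tableau is the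
list of children of the (unlabeled) root. -/
inductive Tab : Type where
  | node : Lit → Bool → List Tab → Tab

def Tab.lit : Tab → Lit | .node l _ _ => l
def Tab.side : Tab → Bool | .node _ s _ => s
def Tab.children : Tab → List Tab | .node _ _ cs => cs

/-- The subtrees of a clausal tableau (given as list of children of the root)
together with the branch of (literal, side) pairs of their strict ancestors,
innermost first. -/
inductive OccIn (T : List Tab) : List (Lit × Bool) → Tab → Prop
  | top {t} : t ∈ T → OccIn T [] t
  | step {br l s cs c} : OccIn T br (.node l s cs) → c ∈ cs → OccIn T ((l, s) :: br) c

/-- Well-formedness of a (one-sided) clausal tableau below some node, for the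
clausal formula `F`: the children of every node either are absent or their
literal labels form an instance of a clause in `F`. -/
inductive TabFor (F : CForm) : Tab → Prop
  | mk {l s cs} : (cs = [] ∨ ∃ D ∈ F, instClause (cs.map Tab.lit) D) →
      (∀ c ∈ cs, TabFor F c) → TabFor F (.node l s cs)

/-- A clausal tableau for the clausal formula `F`. -/
def TableauFor (F : CForm) (T : List Tab) : Prop :=
  (T = [] ∨ ∃ D ∈ F, instClause (T.map Tab.lit) D) ∧ ∀ t ∈ T, TabFor F t

/-- Closedness of the subtree rooted at a node whose strict ancestors carry
the literals in `br`: every leaf has an ancestor labeled with its complement. -/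
inductive ClosedFrom : List Lit → Tab → Prop
  | leaf {br : List Lit} {l s} : litCompl l ∈ br → ClosedFrom br (.node l s [])
  | inner {br : List Lit} {l s cs} : cs ≠ [] → (∀ c ∈ cs, ClosedFrom (l :: br) c) →
      ClosedFrom br (.node l s cs)

/-- A closed clausal tableau: all leaves are closed (the root, being unlabeled,
must have children). -/
def ClosedTableau (T : List Tab) : Prop := T ≠ [] ∧ ∀ t ∈ T, ClosedFrom [] t

/-- All nodes of a subtree satisfy `P`. -/
inductive TabAll (P : Tab → Prop) : Tab → Prop
  | mk {l s cs} : P (.node l s cs) → (∀ c ∈ cs, TabAll P c) → TabAll P (.node l s cs)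

/-! ### Two-sided clausal tableaux and interpolant extraction -/

/-- Well-formedness of a two-sided clausal tableau below a node, for clausal
formulas `Fr` (side `true` = red) and `Fb` (side `false` = blue):
siblings have the same side, and the literal labels of the children of any
node form an instance of a clause of the formula of their side. -/
inductive TwoTabFor (Fr Fb : CForm) : Tab → Prop
  | mk {l s cs} :
      (cs = [] ∨ ∃ b : Bool, (∀ c ∈ cs, Tab.side c = b) ∧
        ∃ D ∈ (if b then Fr else Fb), instClause (cs.map Tab.lit) D) →
      (∀ c ∈ cs, TwoTabFor Fr Fb c) → TwoTabFor Fr Fb (.node l s cs)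

/-- A two-sided clausal tableau for `Fr` and `Fb`. -/
def TwoTableauFor (Fr Fb : CForm) (T : List Tab) : Prop :=
  (T = [] ∨ ∃ b : Bool, (∀ c ∈ T, Tab.side c = b) ∧
    ∃ D ∈ (if b then Fr else Fb), instClause (T.map Tab.lit) D)
  ∧ ∀ t ∈ T, TwoTabFor Fr Fb t

/-- Closedness, with the branch carrying side labels. -/
inductive SClosedFrom : List (Lit × Bool) → Tab → Prop
  | leaf {br : List (Lit × Bool)} {l s} : (∃ s', (litCompl l, s') ∈ br) →
      SClosedFrom br (.node l s [])
  | inner {br : List (Lit × Bool)} {l s cs} : cs ≠ [] →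
      (∀ c ∈ cs, SClosedFrom ((l, s) :: br) c) → SClosedFrom br (.node l s cs)

/-- The value of ipol at a closed leaf, determined by the side `s` of the leaf
and the side `ts` of its target, from the literal label `l`. -/
def leafIpol (s ts : Bool) (l : Lit) : Fml :=
  match s, ts with
  | true, true => .fls
  | true, false => litFml l
  | false, true => litFml (litCompl l)
  | false, false => .tru

/-- `Ipol br t H`: `H` is a value of ipol at the node `t` whose branch of strict
ancestors (with sides) is `br`, for some association of targets to closed leaves.
At a leaf, the target is an ancestor labeled with the complement of the leaf's
literal; at an inner node, ipol is the disjunction (side red) or conjunction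
(side blue) of the values at the children. -/
inductive Ipol : List (Lit × Bool) → Tab → Fml → Prop
  | leaf {br l s ts} : (litCompl l, ts) ∈ br →
      Ipol br (.node l s []) (leafIpol s ts l)
  | innerR {br l s cs Hs} : cs ≠ [] → (∀ c ∈ cs, Tab.side c = true) →
      cs.length = Hs.length →
      (∀ p ∈ List.zip cs Hs, Ipol ((l, s) :: br) p.1 p.2) →
      Ipol br (.node l s cs) (Hs.foldr .or .fls)
  | innerB {br l s cs Hs} : cs ≠ [] → (∀ c ∈ cs, Tab.side c = false) →
      cs.length = Hs.length →
      (∀ p ∈ List.zip cs Hs, Ipol ((l, s) :: br) p.1 p.2) →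
      Ipol br (.node l s cs) (Hs.foldr .and .tru)

/-- `IpolRoot T H`: `H` is a value of ipol at the root of the tableau `T`. -/
inductive IpolRoot : List Tab → Fml → Prop
  | rootR {T Hs} : T ≠ [] → (∀ t ∈ T, Tab.side t = true) →
      T.length = Hs.length → (∀ p ∈ List.zip T Hs, Ipol [] p.1 p.2) →
      IpolRoot T (Hs.foldr .or .fls)
  | rootB {T Hs} : T ≠ [] → (∀ t ∈ T, Tab.side t = false) →
      T.length = Hs.length → (∀ p ∈ List.zip T Hs, Ipol [] p.1 p.2) →
      IpolRoot T (Hs.foldr .and .tru)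

/-- branch_S(N): the conjunction of the literals with side `s` on the branch `br`. -/
def branchFml (s : Bool) (br : List (Lit × Bool)) : Fml :=
  ((br.filter (fun p => p.2 == s)).map (fun p => litFml p.1)).foldr .and .tru

end CTI

namespace CTI

/-- Application of a quantifier prefix (`true` = universal, `false` =
existential quantifier) to a formula. -/
def applyPrefix : List (Bool × ℕ) → Fml → Fml
  | [], F => F
  | (true, x) :: Q, F => .all x (applyPrefix Q F)
  | (false, x) :: Q, F => .ex x (applyPrefix Q F)

/-- `H` is a Craig-Lyndon interpolant of `F` and `G`. -/
def CraigLyndon (F G H : Fml) : Prop :=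
  Fml.fv H = ∅ ∧ Entails F H ∧ Entails H G ∧
  Fml.preds H ⊆ Fml.preds F ∩ Fml.preds G ∧
  Fml.funs H ⊆ Fml.funs F ∩ Fml.funs G

end CTI

namespace CTI

/-- `I` and `I'` agree on all function symbols outside `Sf` and all predicate
symbols outside `Sp`. -/
def AgreeExcept {D : Type} (Sf Sp : Set ℕ) (I I' : Interp D) : Prop :=
  (∀ f, f ∉ Sf → I.fn f = I'.fn f) ∧ (∀ p, p ∉ Sp → I.pr p = I'.pr p)

/-- The terms occurring in a formula as an argument of a predicate. -/
def Fml.pargs : Fml → Set Tm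
  | .tru => ∅
  | .fls => ∅
  | .atom _ ts => {t | t ∈ ts}
  | .neg F => F.pargs
  | .and F G => F.pargs ∪ G.pargs
  | .or F G => F.pargs ∪ G.pargs
  | .all _ F => F.pargs
  | .ex _ F => F.pargs

/-- `TopSym S t u`: `u` occurs in `t` as a subterm whose principal functor is in
`S`, at a position not strictly inside another such subterm. -/
inductive TopSym (S : Set ℕ) : Tm → Tm → Prop
  | here {f : ℕ} {ts : List Tm} : f ∈ S → TopSym S (.fn f ts) (.fn f ts)
  | there {f : ℕ} {ts : List Tm} {t u : Tm} :
      f ∉ S → t ∈ ts → TopSym S t u → TopSym S (.fn f ts) u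

/-- The `S`-terms occurring in `H` at a position not strictly inside
another `S`-term. -/
def Fml.topTerms (S : Set ℕ) (H : Fml) : Set Tm := {u | ∃ t ∈ H.pargs, TopSym S t u}

open Classical in
/-- Replace every occurrence of an `S`-term that is not strictly inside another
`S`-term by the variable assigned to it by `v`. -/
noncomputable def absTm (S : Set ℕ) (v : Tm → ℕ) : Tm → Tm
  | .var x => .var x
  | .fn f ts =>
      if f ∈ S then .var (v (.fn f ts))
      else .fn f (ts.attach.map (fun t => absTm S v t.1))
decreasing_by
  have h := List.sizeOf_lt_of_mem t.2; simp_wf; omega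

/-- Apply `absTm` to all terms of a formula. -/
noncomputable def Fml.absF (S : Set ℕ) (v : Tm → ℕ) : Fml → Fml
  | .tru => .tru
  | .fls => .fls
  | .atom p ts => .atom p (ts.map (absTm S v))
  | .neg F => .neg (F.absF S v)
  | .and F G => .and (F.absF S v) (G.absF S v)
  | .or F G => .or (F.absF S v) (G.absF S v)
  | .all x F => .all x (F.absF S v)
  | .ex x F => .ex x (F.absF S v)

/-- `t` is a term whose principal functor is in `g`. -/
def isGTm (g : Set ℕ) (t : Tm) : Prop := ∃ h ts, t = Tm.fn h ts ∧ h ∈ g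

open Classical in
/-- The quantifier prefix of the lifted interpolant: for each replaced term, a
universal quantifier if it is a `g`-term and an existential quantifier if it is
an `f`-term, upon the variable assigned to it, in the given order. -/
noncomputable def mkPrefix (g : Set ℕ) (v : Tm → ℕ) (zs : List Tm) (H : Fml) : Fml :=
  zs.foldr (fun t K => if isGTm g t then Fml.all (v t) K else Fml.ex (v t) K) H

/-- f: the function symbols occurring in `Fc` but not in `Gc`. -/
def fSet (Fc Gc : CForm) : Set ℕ := cformFuns Fc \ cformFuns Gc

/-- g: the function symbols occurring in `Gc` but not in `Fc`, plus the fresh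
constant `k`. -/
def gSet (Fc Gc : CForm) (k : ℕ) : Set ℕ := (cformFuns Gc \ cformFuns Fc) ∪ {k}

end CTI


namespace CTI

theorem tm_attach_map {α : Type*} (ts : List Tm) (f : Tm → α) :
    ts.attach.map (fun x => f x.1) = ts.map f := by simp

@[simp] theorem Tm.eval_var {D} (I : Interp D) (a : ℕ → D) (x : ℕ) :
    Tm.eval I a (.var x) = a x := by rw [Tm.eval]

@[simp] theorem Tm.eval_fn {D} (I : Interp D) (a : ℕ → D) (f : ℕ) (ts : List Tm) :
    Tm.eval I a (.fn f ts) = I.fn f (ts.map (Tm.eval I a)) := by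
  rw [Tm.eval]; simp

@[simp] theorem Tm.vars_var (x : ℕ) : Tm.vars (.var x) = [x] := by rw [Tm.vars]

@[simp] theorem Tm.vars_fn (f : ℕ) (ts : List Tm) :
    Tm.vars (.fn f ts) = (ts.map Tm.vars).flatten := by
  rw [Tm.vars]; simp

@[simp] theorem Tm.funs_var (x : ℕ) : Tm.funs (.var x) = [] := by rw [Tm.funs]

@[simp] theorem Tm.funs_fn (f : ℕ) (ts : List Tm) :
    Tm.funs (.fn f ts) = f :: (ts.map Tm.funs).flatten := by
  rw [Tm.funs]; simp

@[simp] theorem Tm.applySub_var (σ : ℕ → Tm) (x : ℕ) :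
    Tm.applySub σ (.var x) = σ x := by rw [Tm.applySub]

@[simp] theorem Tm.applySub_fn (σ : ℕ → Tm) (f : ℕ) (ts : List Tm) :
    Tm.applySub σ (.fn f ts) = .fn f (ts.map (Tm.applySub σ)) := by
  rw [Tm.applySub]; simp

@[simp] theorem absTm_var (S : Set ℕ) (v : Tm → ℕ) (x : ℕ) :
    absTm S v (.var x) = .var x := by rw [absTm]

theorem absTm_fn_mem (S : Set ℕ) (v : Tm → ℕ) {f : ℕ} (ts : List Tm) (h : f ∈ S) :
    absTm S v (.fn f ts) = .var (v (.fn f ts)) := by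
  rw [absTm]; simp [h]

theorem absTm_fn_notmem (S : Set ℕ) (v : Tm → ℕ) {f : ℕ} (ts : List Tm) (h : f ∉ S) :
    absTm S v (.fn f ts) = .fn f (ts.map (absTm S v)) := by
  rw [absTm]; simp [h]

theorem Tm.myrec {P : Tm → Prop} (hv : ∀ x, P (.var x))
    (hf : ∀ f ts, (∀ t ∈ ts, P t) → P (.fn f ts)) : ∀ t, P t
  | .var x => hv x
  | .fn f ts => hf f ts (fun t _ht => Tm.myrec hv hf t)
decreasing_by
  have h := List.sizeOf_lt_of_mem _ht; simp_wf; omega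

theorem Subt.sizeLe {s t : Tm} (h : Subt s t) : sizeOf s ≤ sizeOf t := by
  induction h with
  | refl => exact le_refl _
  | step f ts hmem _ ih =>
      have := List.sizeOf_lt_of_mem hmem
      simp only [Tm.fn.sizeOf_spec]; omega

theorem strictSubt_of_mem_arg {u s : Tm} {f : ℕ} {ts : List Tm}
    (hu : Subt u s) (hs : s ∈ ts) : StrictSubt u (.fn f ts) := by
  refine ⟨Subt.step f ts hs hu, ?_⟩
  intro heq
  have h1 := hu.sizeLe
  have h2 := List.sizeOf_lt_of_mem hs
  rw [heq] at h1
  simp only [Tm.fn.sizeOf_spec] at h1; omega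

theorem builtFrom_ground {S C : Set ℕ} {t : Tm} (h : Tm.builtFrom S C t) :
    Tm.vars t = [] := by
  induction h with
  | app hf _ ih => simp only [Tm.vars_fn]; rw [List.flatten_eq_nil_iff]; simp_all
  | cst hc => simp

theorem builtFrom_funs {S C : Set ℕ} {t : Tm} (h : Tm.builtFrom S C t) :
    ∀ f ∈ Tm.funs t, f ∈ S ∪ C := by
  induction h with
  | @app f ts hf hts ih =>
      intro g hg
      simp only [Tm.funs_fn, List.mem_cons, List.mem_flatten, List.mem_map] at hg
      rcases hg with rfl | ⟨l, ⟨t', ht', rfl⟩, hgl⟩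
      · exact Or.inl hf
      · exact ih t' ht' g hgl
  | @cst c hc =>
      intro g hg
      simp only [Tm.funs_fn, List.map_nil, List.flatten_nil, List.mem_singleton] at hg
      subst hg; exact Or.inr hc

theorem ground_args {f : ℕ} {ts : List Tm} (h : Tm.vars (.fn f ts) = []) :
    ∀ t ∈ ts, Tm.vars t = [] := by
  simp only [Tm.vars_fn, List.flatten_eq_nil_iff] at h
  intro t ht; exact h _ (List.mem_map_of_mem ht)

theorem Tm.eval_congr {D} (I : Interp D) {a a' : ℕ → D} :
    ∀ t : Tm, (∀ x ∈ Tm.vars t, a x = a' x) → Tm.eval I a t = Tm.eval I a' t := by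
  refine Tm.myrec (fun x h => ?_) (fun f ts ih h => ?_)
  · simp only [Tm.eval_var]; exact h x (by simp)
  · simp only [Tm.eval_fn]
    congr 1
    apply List.map_congr_left
    intro t ht
    refine ih t ht (fun x hx => h x ?_)
    simp only [Tm.vars_fn, List.mem_flatten, List.mem_map]
    exact ⟨Tm.vars t, ⟨t, ht, rfl⟩, hx⟩

theorem Tm.eval_interp_congr {D} {I I' : Interp D} (a : ℕ → D) :
    ∀ t : Tm, (∀ f ∈ Tm.funs t, I.fn f = I'.fn f) → Tm.eval I a t = Tm.eval I' a t := by
  refine Tm.myrec (fun x h => by simp) (fun f ts ih h => ?_)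
  simp only [Tm.eval_fn]
  rw [h f (by simp)]
  congr 1
  apply List.map_congr_left
  intro t ht
  refine ih t ht (fun g hg => h g ?_)
  simp only [Tm.funs_fn, List.mem_cons, List.mem_flatten, List.mem_map]
  exact Or.inr ⟨Tm.funs t, ⟨t, ht, rfl⟩, hg⟩

theorem Tm.eval_ground_congr {D} (I : Interp D) {a a' : ℕ → D} (t : Tm)
    (h : Tm.vars t = []) : Tm.eval I a t = Tm.eval I a' t :=
  Tm.eval_congr I t (by simp [h])

end CTI

namespace CTI

section FmlLemmas

@[simp] theorem holds_tru {D} (I : Interp D) (a : ℕ → D) : Fml.holds I a .tru := trivial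
@[simp] theorem holds_fls {D} (I : Interp D) (a : ℕ → D) : ¬ Fml.holds I a .fls := id
@[simp] theorem holds_atom {D} (I : Interp D) (a : ℕ → D) (p : ℕ) (ts : List Tm) :
    Fml.holds I a (.atom p ts) ↔ I.pr p (ts.map (Tm.eval I a)) := Iff.rfl
@[simp] theorem holds_neg {D} (I : Interp D) (a : ℕ → D) (F : Fml) :
    Fml.holds I a (.neg F) ↔ ¬ Fml.holds I a F := Iff.rfl
@[simp] theorem holds_and {D} (I : Interp D) (a : ℕ → D) (F G : Fml) :
    Fml.holds I a (.and F G) ↔ Fml.holds I a F ∧ Fml.holds I a G := Iff.rfl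
@[simp] theorem holds_or {D} (I : Interp D) (a : ℕ → D) (F G : Fml) :
    Fml.holds I a (.or F G) ↔ Fml.holds I a F ∨ Fml.holds I a G := Iff.rfl
@[simp] theorem holds_all {D} (I : Interp D) (a : ℕ → D) (x : ℕ) (F : Fml) :
    Fml.holds I a (.all x F) ↔ ∀ d : D, Fml.holds I (Function.update a x d) F := Iff.rfl
@[simp] theorem holds_ex {D} (I : Interp D) (a : ℕ → D) (x : ℕ) (F : Fml) :
    Fml.holds I a (.ex x F) ↔ ∃ d : D, Fml.holds I (Function.update a x d) F := Iff.rfl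

/-- holds depends only on the free variables. -/
theorem holds_fv_congr {D} (I : Interp D) :
    ∀ (F : Fml) (a a' : ℕ → D), (∀ x ∈ F.fv, a x = a' x) →
      (Fml.holds I a F ↔ Fml.holds I a' F) := by
  intro F
  induction F with
  | tru => simp
  | fls => simp
  | atom p ts =>
      intro a a' h
      simp only [holds_atom]
      have : ts.map (Tm.eval I a) = ts.map (Tm.eval I a') := by
        apply List.map_congr_left
        intro t ht
        exact Tm.eval_congr I t (fun x hx => h x ⟨t, ht, hx⟩)
      rw [this]
  | neg F ih => intro a a' h; simp only [holds_neg]; rw [ih a a' h]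
  | and F G ihF ihG =>
      intro a a' h
      simp only [holds_and]
      rw [ihF a a' (fun x hx => h x (Or.inl hx)), ihG a a' (fun x hx => h x (Or.inr hx))]
  | or F G ihF ihG =>
      intro a a' h
      simp only [holds_or]
      rw [ihF a a' (fun x hx => h x (Or.inl hx)), ihG a a' (fun x hx => h x (Or.inr hx))]
  | all y F ih =>
      intro a a' h
      simp only [holds_all]
      refine forall_congr' (fun d => ih _ _ ?_)
      intro x hx
      rcases eq_or_ne x y with rfl | hne
      · simp
      · simp only [Function.update_of_ne hne]
        exact h x ⟨hx, hne⟩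
  | ex y F ih =>
      intro a a' h
      simp only [holds_ex]
      refine exists_congr (fun d => ih _ _ ?_)
      intro x hx
      rcases eq_or_ne x y with rfl | hne
      · simp
      · simp only [Function.update_of_ne hne]
        exact h x ⟨hx, hne⟩

/-- holds depends only on the interpretation of occurring symbols. -/
theorem holds_interp_congr {D} {I I' : Interp D}
    (hpr : ∀ p, I.pr p = I'.pr p) :
    ∀ (F : Fml) (a : ℕ → D), (∀ f ∈ F.funs, I.fn f = I'.fn f) →
      (Fml.holds I a F ↔ Fml.holds I' a F) := by
  intro F
  induction F with
  | tru => simp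
  | fls => simp
  | atom p ts =>
      intro a h
      simp only [holds_atom, hpr p]
      have : ts.map (Tm.eval I a) = ts.map (Tm.eval I' a) := by
        apply List.map_congr_left
        intro t ht
        exact Tm.eval_interp_congr a t (fun f hf => h f ⟨t, ht, hf⟩)
      rw [this]
  | neg F ih => intro a h; simp only [holds_neg]; rw [ih a h]
  | and F G ihF ihG =>
      intro a h
      simp only [holds_and]
      rw [ihF a (fun f hf => h f (Or.inl hf)), ihG a (fun f hf => h f (Or.inr hf))]
  | or F G ihF ihG =>
      intro a h
      simp only [holds_or]
      rw [ihF a (fun f hf => h f (Or.inl hf)), ihG a (fun f hf => h f (Or.inr hf))]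
  | all y F ih =>
      intro a h
      simp only [holds_all]
      exact forall_congr' (fun d => ih _ h)
  | ex y F ih =>
      intro a h
      simp only [holds_ex]
      exact exists_congr (fun d => ih _ h)

theorem cformFml_holds_iff {D} (I : Interp D) (a : ℕ → D) (L : CForm) :
    Fml.holds I a (cformFml L) ↔ ∀ C ∈ L, Fml.holds I a (clauseFml C) := by
  induction L with
  | nil => simp [cformFml]
  | cons C L ih =>
      simp only [cformFml, List.foldr_cons, holds_and] at *
      rw [ih]
      constructor
      · rintro ⟨h1, h2⟩ C' hC'
        rcases List.mem_cons.mp hC' with rfl | h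
        exacts [h1, h2 _ h]
      · intro h
        exact ⟨h _ List.mem_cons_self, fun C' hC' => h _ (List.mem_cons_of_mem _ hC')⟩

theorem clauseFml_holds_iff {D} (I : Interp D) (a : ℕ → D) (C : Clause) :
    Fml.holds I a (clauseFml C) ↔ ∃ l ∈ C, Fml.holds I a (litFml l) := by
  induction C with
  | nil => simp [clauseFml]
  | cons l C ih =>
      simp only [clauseFml, List.foldr_cons, holds_or] at *
      rw [ih]
      constructor
      · rintro (h | ⟨l', hl', h⟩)
        exacts [⟨l, List.mem_cons_self, h⟩, ⟨l', List.mem_cons_of_mem _ hl', h⟩]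
      · rintro ⟨l', hl', h⟩
        rcases List.mem_cons.mp hl' with rfl | hm
        exacts [Or.inl h, Or.inr ⟨l', hm, h⟩]

end FmlLemmas

end CTI

namespace CTI

open Classical in
/-- Generalized quantifier prefix. -/
noncomputable def pfx (isU : Tm → Prop) (v : Tm → ℕ) (zs : List Tm) (X : Fml) : Fml :=
  zs.foldr (fun t K => if isU t then Fml.all (v t) K else Fml.ex (v t) K) X

theorem mkPrefix_eq_pfx (g : Set ℕ) (v : Tm → ℕ) (zs : List Tm) (X : Fml) :
    mkPrefix g v zs X = pfx (isGTm g) v zs X := rfl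

section Syntactic

variable {S : Set ℕ} {v : Tm → ℕ}

theorem topSym_shape {t u : Tm} (h : TopSym S t u) :
    ∃ f ts, u = .fn f ts ∧ f ∈ S := by
  induction h with
  | here hf => exact ⟨_, _, rfl, hf⟩
  | there _ _ _ ih => exact ih

theorem topSym_subt {t u : Tm} (h : TopSym S t u) : Subt u t := by
  induction h with
  | here hf => exact Subt.refl _
  | there _ hmem _ ih => exact Subt.step _ _ hmem ih

theorem subt_vars {u t : Tm} (h : Subt u t) : ∀ x ∈ Tm.vars u, x ∈ Tm.vars t := by
  induction h with
  | refl => exact fun x hx => hx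
  | step f ts hmem _ ih =>
      intro x hx
      simp only [Tm.vars_fn, List.mem_flatten, List.mem_map]
      exact ⟨_, ⟨_, hmem, rfl⟩, ih x hx⟩

theorem subt_ground {u t : Tm} (h : Subt u t) (hg : Tm.vars t = []) :
    Tm.vars u = [] := by
  rcases List.eq_nil_or_concat (Tm.vars u) with h0 | ⟨l, x, hx⟩
  · exact h0
  · exfalso
    have : x ∈ Tm.vars t := subt_vars h x (by simp [hx])
    simp [hg] at this

theorem funs_absTm : ∀ w : Tm, ∀ f ∈ Tm.funs (absTm S v w), f ∈ Tm.funs w ∧ f ∉ S := by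
  refine Tm.myrec (fun x => by simp) (fun g ts ih => ?_)
  intro f hf
  by_cases hg : g ∈ S
  · rw [absTm_fn_mem S v ts hg] at hf; simp at hf
  · rw [absTm_fn_notmem S v ts hg] at hf
    simp only [Tm.funs_fn, List.map_map, List.mem_cons, List.mem_flatten, List.mem_map,
      Function.comp] at hf
    rcases hf with rfl | ⟨l, ⟨t, ht, rfl⟩, hfl⟩
    · exact ⟨by simp, hg⟩
    · rcases ih t ht f hfl with ⟨h1, h2⟩
      refine ⟨?_, h2⟩
      simp only [Tm.funs_fn, List.mem_cons, List.mem_flatten, List.mem_map]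
      exact Or.inr ⟨_, ⟨t, ht, rfl⟩, h1⟩

theorem vars_absTm : ∀ w : Tm, ∀ x ∈ Tm.vars (absTm S v w),
    x ∈ Tm.vars w ∨ ∃ u, TopSym S w u ∧ x = v u := by
  refine Tm.myrec (fun y => by simp) (fun g ts ih => ?_)
  intro x hx
  by_cases hg : g ∈ S
  · rw [absTm_fn_mem S v ts hg] at hx
    simp only [Tm.vars_var, List.mem_singleton] at hx
    exact Or.inr ⟨.fn g ts, TopSym.here hg, hx⟩
  · rw [absTm_fn_notmem S v ts hg] at hx
    simp only [Tm.vars_fn, List.map_map, List.mem_flatten, List.mem_map,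
      Function.comp] at hx
    rcases hx with ⟨l, ⟨t, ht, rfl⟩, hxl⟩
    rcases ih t ht x hxl with h | ⟨u, hu, rfl⟩
    · left
      simp only [Tm.vars_fn, List.mem_flatten, List.mem_map]
      exact ⟨_, ⟨t, ht, rfl⟩, h⟩
    · exact Or.inr ⟨u, TopSym.there hg ht hu, rfl⟩

theorem funs_absF : ∀ X : Fml, ∀ f ∈ (X.absF S v).funs,
    ∃ w ∈ X.pargs, f ∈ Tm.funs (absTm S v w) := by
  intro X
  induction X with
  | tru => intro f hf; simp [Fml.absF, Fml.funs] at hf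
  | fls => intro f hf; simp [Fml.absF, Fml.funs] at hf
  | atom p ts =>
      intro f hf
      simp only [Fml.absF, Fml.funs, Set.mem_setOf_eq, List.mem_map] at hf
      rcases hf with ⟨t', ⟨w, hw, rfl⟩, hft⟩
      exact ⟨w, hw, hft⟩
  | neg F ih => exact ih
  | and F G ihF ihG =>
      rintro f (hf | hf)
      · rcases ihF f hf with ⟨w, hw, h⟩; exact ⟨w, Or.inl hw, h⟩
      · rcases ihG f hf with ⟨w, hw, h⟩; exact ⟨w, Or.inr hw, h⟩
  | or F G ihF ihG =>
      rintro f (hf | hf)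
      · rcases ihF f hf with ⟨w, hw, h⟩; exact ⟨w, Or.inl hw, h⟩
      · rcases ihG f hf with ⟨w, hw, h⟩; exact ⟨w, Or.inr hw, h⟩
  | all y F ih => exact ih
  | ex y F ih => exact ih

theorem fv_absF : ∀ X : Fml, ∀ x ∈ (X.absF S v).fv,
    ∃ w ∈ X.pargs, x ∈ Tm.vars (absTm S v w) := by
  intro X
  induction X with
  | tru => intro x hx; simp [Fml.absF, Fml.fv] at hx
  | fls => intro x hx; simp [Fml.absF, Fml.fv] at hx
  | atom p ts =>
      intro x hx
      simp only [Fml.absF, Fml.fv, Set.mem_setOf_eq, List.mem_map] at hx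
      rcases hx with ⟨t', ⟨w, hw, rfl⟩, hxt⟩
      exact ⟨w, hw, hxt⟩
  | neg F ih => exact ih
  | and F G ihF ihG =>
      rintro x (hx | hx)
      · rcases ihF x hx with ⟨w, hw, h⟩; exact ⟨w, Or.inl hw, h⟩
      · rcases ihG x hx with ⟨w, hw, h⟩; exact ⟨w, Or.inr hw, h⟩
  | or F G ihF ihG =>
      rintro x (hx | hx)
      · rcases ihF x hx with ⟨w, hw, h⟩; exact ⟨w, Or.inl hw, h⟩
      · rcases ihG x hx with ⟨w, hw, h⟩; exact ⟨w, Or.inr hw, h⟩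
  | all y F ih =>
      rintro x ⟨hx, -⟩
      exact ih x hx
  | ex y F ih =>
      rintro x ⟨hx, -⟩
      exact ih x hx

theorem ground_pargs : ∀ X : Fml, X.isGround → ∀ w ∈ X.pargs, Tm.vars w = [] := by
  intro X
  induction X with
  | tru => intro _ w hw; simp [Fml.pargs] at hw
  | fls => intro _ w hw; simp [Fml.pargs] at hw
  | atom p ts => intro h w hw; exact h w hw
  | neg F ih => exact ih
  | and F G ihF ihG =>
      rintro ⟨h1, h2⟩ w (hw | hw)
      exacts [ihF h1 w hw, ihG h2 w hw]
  | or F G ihF ihG =>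
      rintro ⟨h1, h2⟩ w (hw | hw)
      exacts [ihF h1 w hw, ihG h2 w hw]
  | all y F ih => intro h; exact absurd h id
  | ex y F ih => intro h; exact absurd h id

theorem pargs_lits : ∀ (X : Fml) (c : Bool), ∀ w ∈ X.pargs,
    ∃ bp ∈ X.litsP c, w ∈ bp.2.2 := by
  intro X
  induction X with
  | tru => intro c w hw; simp [Fml.pargs] at hw
  | fls => intro c w hw; simp [Fml.pargs] at hw
  | atom p ts =>
      intro c w hw
      exact ⟨(c, p, ts), rfl, hw⟩
  | neg F ih => intro c w hw; exact ih (!c) w hw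
  | and F G ihF ihG =>
      rintro c w (hw | hw)
      · rcases ihF c w hw with ⟨bp, h1, h2⟩; exact ⟨bp, Or.inl h1, h2⟩
      · rcases ihG c w hw with ⟨bp, h1, h2⟩; exact ⟨bp, Or.inr h1, h2⟩
  | or F G ihF ihG =>
      rintro c w (hw | hw)
      · rcases ihF c w hw with ⟨bp, h1, h2⟩; exact ⟨bp, Or.inl h1, h2⟩
      · rcases ihG c w hw with ⟨bp, h1, h2⟩; exact ⟨bp, Or.inr h1, h2⟩
  | all y F ih => exact ih
  | ex y F ih => exact ih

theorem litsP_absF : ∀ (X : Fml) (c : Bool) (bp : Bool × ℕ × List Tm),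
    bp ∈ (X.absF S v).litsP c →
    ∃ ts, (bp.1, bp.2.1, ts) ∈ X.litsP c ∧ bp.2.2 = ts.map (absTm S v) := by
  intro X
  induction X with
  | tru => intro c bp h; simp [Fml.absF, Fml.litsP] at h
  | fls => intro c bp h; simp [Fml.absF, Fml.litsP] at h
  | atom p ts =>
      intro c bp h
      simp only [Fml.absF, Fml.litsP, Set.mem_singleton_iff] at h
      subst h
      exact ⟨ts, rfl, rfl⟩
  | neg F ih => intro c bp h; exact ih (!c) bp h
  | and F G ihF ihG =>
      rintro c bp (h | h)
      · rcases ihF c bp h with ⟨ts, h1, h2⟩; exact ⟨ts, Or.inl h1, h2⟩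
      · rcases ihG c bp h with ⟨ts, h1, h2⟩; exact ⟨ts, Or.inr h1, h2⟩
  | or F G ihF ihG =>
      rintro c bp (h | h)
      · rcases ihF c bp h with ⟨ts, h1, h2⟩; exact ⟨ts, Or.inl h1, h2⟩
      · rcases ihG c bp h with ⟨ts, h1, h2⟩; exact ⟨ts, Or.inr h1, h2⟩
  | all y F ih => exact ih
  | ex y F ih => exact ih

theorem litsP_pfx (isU : Tm → Prop) (zs : List Tm) (X : Fml) (c : Bool) :
    (pfx isU v zs X).litsP c = X.litsP c := by
  classical
  induction zs with
  | nil => rfl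
  | cons t zs ih =>
      show Fml.litsP c (if isU t then Fml.all (v t) _ else Fml.ex (v t) _) = _
      by_cases h : isU t
      · rw [if_pos h]; exact ih
      · rw [if_neg h]; exact ih

theorem funs_pfx (isU : Tm → Prop) (zs : List Tm) (X : Fml) :
    (pfx isU v zs X).funs = X.funs := by
  classical
  induction zs with
  | nil => rfl
  | cons t zs ih =>
      show Fml.funs (if isU t then Fml.all (v t) _ else Fml.ex (v t) _) = _
      by_cases h : isU t
      · rw [if_pos h]; exact ih
      · rw [if_neg h]; exact ih

theorem fv_pfx (isU : Tm → Prop) (zs : List Tm) (X : Fml) :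
    ∀ x ∈ (pfx isU v zs X).fv, x ∈ X.fv ∧ ∀ t ∈ zs, x ≠ v t := by
  classical
  induction zs with
  | nil => intro x hx; exact ⟨hx, by simp⟩
  | cons t zs ih =>
      intro x hx
      have hx' : x ∈ (pfx isU v zs X).fv ∧ x ≠ v t := by
        revert hx
        show x ∈ Fml.fv (if isU t then Fml.all (v t) _ else Fml.ex (v t) _) → _
        by_cases h : isU t
        · rw [if_pos h]; rintro ⟨h1, h2⟩; exact ⟨h1, h2⟩
        · rw [if_neg h]; rintro ⟨h1, h2⟩; exact ⟨h1, h2⟩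
      rcases ih x hx'.1 with ⟨h1, h2⟩
      refine ⟨h1, fun t' ht' => ?_⟩
      rcases List.mem_cons.mp ht' with rfl | hm
      · exact hx'.2
      · exact h2 t' hm

/-- The literals of a clausal formula. -/
theorem lits_cform (L : CForm) (c : Bool) :
    Fml.litsP c (cformFml L) =
      {bp | ∃ C ∈ L, ∃ l ∈ C, bp = ((if l.1 then c else !c), l.2.1, l.2.2)} := by
  induction L with
  | nil => simp [cformFml, Fml.litsP]
  | cons C L ih =>
      show Fml.litsP c (.and (clauseFml C) (cformFml L)) = _
      have hcl : ∀ C : Clause, Fml.litsP c (clauseFml C) =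
          {bp | ∃ l ∈ C, bp = ((if l.1 then c else !c), l.2.1, l.2.2)} := by
        intro C
        induction C with
        | nil => simp [clauseFml, Fml.litsP]
        | cons l C ihc =>
            show Fml.litsP c (.or (litFml l) (clauseFml C)) = _
            have hl : Fml.litsP c (litFml l) =
                {((if l.1 then c else !c), l.2.1, l.2.2)} := by
              rcases l with ⟨b, p, ts⟩
              cases b <;> simp [litFml, Fml.litsP]
            ext bp
            simp only [Fml.litsP, Set.mem_union, hl, ihc, Set.mem_setOf_eq,
              Set.mem_singleton_iff, List.mem_cons]
            constructor
            · rintro (rfl | ⟨l', hl', rfl⟩)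
              exacts [⟨l, Or.inl rfl, rfl⟩, ⟨l', Or.inr hl', rfl⟩]
            · rintro ⟨l', (rfl | hm), rfl⟩
              exacts [Or.inl rfl, Or.inr ⟨l', hm, rfl⟩]
      ext bp
      simp only [Fml.litsP, Set.mem_union, hcl, ih, Set.mem_setOf_eq, List.mem_cons]
      constructor
      · rintro (⟨l, hl, rfl⟩ | ⟨C', hC', l, hl, rfl⟩)
        exacts [⟨C, Or.inl rfl, l, hl, rfl⟩, ⟨C', Or.inr hC', l, hl, rfl⟩]
      · rintro ⟨C', (rfl | hm), l, hl, rfl⟩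
        exacts [Or.inl ⟨l, hl, rfl⟩, Or.inr ⟨C', hm, l, hl, rfl⟩]

end Syntactic

end CTI

namespace CTI

open Classical in
/-- Evaluation with overrides: terms in `zs` take the value assigned (via `v`)
by the assignment; otherwise evaluation is compositional. -/
noncomputable def evA {D : Type} (I : Interp D) (v : Tm → ℕ) (zs : List Tm)
    (a : ℕ → D) : Tm → D
  | .var x => a x
  | .fn f ts =>
      if Tm.fn f ts ∈ zs then a (v (Tm.fn f ts))
      else I.fn f (ts.attach.map (fun t => evA I v zs a t.1))
decreasing_by
  have h := List.sizeOf_lt_of_mem t.2; simp_wf; omega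

section Mega

variable {D : Type} (I : Interp D) (v : Tm → ℕ) (zs : List Tm)

@[simp] theorem evA_var (a : ℕ → D) (x : ℕ) : evA I v zs a (.var x) = a x := by
  rw [evA]

theorem evA_fn_mem (a : ℕ → D) {f : ℕ} {ts : List Tm} (h : Tm.fn f ts ∈ zs) :
    evA I v zs a (.fn f ts) = a (v (.fn f ts)) := by
  rw [evA]; simp [h]

theorem evA_fn_notmem (a : ℕ → D) {f : ℕ} {ts : List Tm} (h : Tm.fn f ts ∉ zs) :
    evA I v zs a (.fn f ts) = I.fn f (ts.map (evA I v zs a)) := by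
  rw [evA]; simp [h]

theorem evA_congr {a a' : ℕ → D} :
    ∀ s : Tm, (∀ x ∈ Tm.vars s, a x = a' x) →
      (∀ u ∈ zs, Subt u s → a (v u) = a' (v u)) →
      evA I v zs a s = evA I v zs a' s := by
  refine Tm.myrec (fun x h1 _ => by simpa using h1 x (by simp)) (fun f ts ih h1 h2 => ?_)
  by_cases hm : Tm.fn f ts ∈ zs
  · rw [evA_fn_mem I v zs _ hm, evA_fn_mem I v zs _ hm]
    exact h2 _ hm (Subt.refl _)
  · rw [evA_fn_notmem I v zs _ hm, evA_fn_notmem I v zs _ hm]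
    congr 1
    apply List.map_congr_left
    intro t ht
    refine ih t ht (fun x hx => h1 x ?_) (fun u hu hsub => h2 u hu (Subt.step f ts ht hsub))
    simp only [Tm.vars_fn, List.mem_flatten, List.mem_map]
    exact ⟨_, ⟨t, ht, rfl⟩, hx⟩

/-- Coherence of an assignment on existentially handled terms in `P`. -/
def Coh (isU : Tm → Prop) (a : ℕ → D) (P : List Tm) : Prop :=
  ∀ t ∈ P, ¬ isU t → ∀ f ts, t = Tm.fn f ts →
    a (v t) = I.fn f (ts.map (evA I v zs a))

theorem evA_applySub (isU : Tm → Prop) (FS : Set ℕ) (a : ℕ → D) (σ : ℕ → Tm)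
    (hcoh : Coh I v zs isU a zs)
    (hno : ∀ t ∈ zs, ∀ f ts, t = Tm.fn f ts → f ∈ FS → ¬ isU t) :
    ∀ u : Tm, (∀ f ∈ Tm.funs u, f ∈ FS) →
      evA I v zs a (Tm.applySub σ u) =
        Tm.eval I (fun x => evA I v zs a (σ x)) u := by
  refine Tm.myrec (fun x _ => by simp) (fun f us ih hfs => ?_)
  have hf : f ∈ FS := hfs f (by simp)
  have hargs : (us.map (Tm.applySub σ)).map (evA I v zs a) =
      us.map (Tm.eval I (fun x => evA I v zs a (σ x))) := by
    rw [List.map_map]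
    apply List.map_congr_left
    intro u hu
    refine ih u hu (fun g hg => hfs g ?_)
    simp only [Tm.funs_fn, List.mem_cons, List.mem_flatten, List.mem_map]
    exact Or.inr ⟨_, ⟨u, hu, rfl⟩, hg⟩
  rw [Tm.applySub_fn]
  by_cases hm : Tm.fn f (us.map (Tm.applySub σ)) ∈ zs
  · have hnu := hno _ hm f _ rfl hf
    have := hcoh _ hm hnu f _ rfl
    rw [evA_fn_mem I v zs _ hm, this, hargs, Tm.eval_fn]
  · rw [evA_fn_notmem I v zs _ hm, hargs, Tm.eval_fn]

end Mega

end CTI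

namespace CTI

section Mega2

variable {D : Type} (I : Interp D) (v : Tm → ℕ) (zs : List Tm)

/-- The term interpretation used to transfer ground entailment. -/
noncomputable def KI (a : ℕ → D) : Interp Tm :=
  ⟨fun f ts => .fn f ts, fun p ts => I.pr p (ts.map (evA I v zs a))⟩

theorem eval_KI_ground (a : ℕ → D) (b : ℕ → Tm) :
    ∀ t : Tm, Tm.vars t = [] → Tm.eval (KI I v zs a) b t = t := by
  refine Tm.myrec (fun x h => by simp at h) (fun f ts ih h => ?_)
  rw [Tm.eval_fn]
  show Tm.fn f (ts.map _) = Tm.fn f ts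
  congr 1
  have : ∀ t ∈ ts, Tm.eval (KI I v zs a) b t = t :=
    fun t ht => ih t ht (ground_args h t ht)
  calc ts.map (Tm.eval (KI I v zs a) b) = ts.map id := List.map_congr_left this
    _ = ts := List.map_id ts

theorem eval_absTm (S : Set ℕ) (a : ℕ → D)
    (hheads : ∀ t ∈ zs, ∃ g ts, t = Tm.fn g ts ∧ g ∈ S) :
    ∀ w : Tm, (∀ u, TopSym S w u → u ∈ zs) →
      Tm.eval I a (absTm S v w) = evA I v zs a w := by
  refine Tm.myrec (fun x _ => by simp) (fun f ts ih htop => ?_)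
  by_cases hf : f ∈ S
  · rw [absTm_fn_mem S v ts hf]
    have hm : Tm.fn f ts ∈ zs := htop _ (TopSym.here hf)
    rw [evA_fn_mem I v zs _ hm, Tm.eval_var]
  · rw [absTm_fn_notmem S v ts hf]
    have hm : Tm.fn f ts ∉ zs := by
      intro hmem
      rcases hheads _ hmem with ⟨g, ts', heq, hgS⟩
      injection heq with h1 h2
      subst h1
      exact hf hgS
    rw [evA_fn_notmem I v zs _ hm, Tm.eval_fn, List.map_map]
    congr 1
    apply List.map_congr_left
    intro t ht
    exact ih t ht (fun u hu => htop u (TopSym.there hf ht hu))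

theorem holds_absF_iff (S : Set ℕ) (a : ℕ → D) (b : ℕ → Tm)
    (hheads : ∀ t ∈ zs, ∃ g ts, t = Tm.fn g ts ∧ g ∈ S) :
    ∀ X : Fml, X.isGround →
      (∀ w ∈ X.pargs, ∀ u, TopSym S w u → u ∈ zs) →
      ((X.absF S v).holds I a ↔ X.holds (KI I v zs a) b) := by
  intro X
  induction X with
  | tru => intro _ _; exact Iff.rfl
  | fls => intro _ _; exact Iff.rfl
  | atom p ts =>
      intro hg htop
      show I.pr p ((ts.map (absTm S v)).map (Tm.eval I a)) ↔
        I.pr p ((ts.map (Tm.eval (KI I v zs a) b)).map (evA I v zs a))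
      have h1 : (ts.map (absTm S v)).map (Tm.eval I a) = ts.map (evA I v zs a) := by
        rw [List.map_map]
        apply List.map_congr_left
        intro w hw
        exact eval_absTm I v zs S a hheads w (htop w hw)
      have h2 : (ts.map (Tm.eval (KI I v zs a) b)).map (evA I v zs a) =
          ts.map (evA I v zs a) := by
        rw [List.map_map]
        apply List.map_congr_left
        intro w hw
        simp only [Function.comp]
        rw [eval_KI_ground I v zs a b w (hg w hw)]
      rw [h1, h2]
  | neg F ih =>
      intro hg htop
      exact not_congr (ih hg htop)
  | and F G ihF ihG =>
      rintro ⟨hg1, hg2⟩ htop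
      exact and_congr (ihF hg1 (fun w hw => htop w (Or.inl hw)))
        (ihG hg2 (fun w hw => htop w (Or.inr hw)))
  | or F G ihF ihG =>
      rintro ⟨hg1, hg2⟩ htop
      exact or_congr (ihF hg1 (fun w hw => htop w (Or.inl hw)))
        (ihG hg2 (fun w hw => htop w (Or.inr hw)))
  | all y F ih => intro hg; exact absurd hg id
  | ex y F ih => intro hg; exact absurd hg id

theorem claimA (S : Set ℕ) (isU : Tm → Prop) (Cc Cb : CForm) (Hb0 : Fml) (a : ℕ → D)
    (hCc : ∀ b' : ℕ → D, (cformFml Cc).holds I b')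
    (hCb : ∀ C ∈ Cb, ∃ Dc ∈ Cc, instClause C Dc)
    (hCbG : ∀ C ∈ Cb, ∀ l ∈ C, ∀ t ∈ l.2.2, Tm.vars t = [])
    (hEnt : Entails (cformFml Cb) Hb0)
    (hGr : Hb0.isGround)
    (hzs0 : ∀ u, u ∈ Hb0.topTerms S → u ∈ zs)
    (hheads : ∀ t ∈ zs, ∃ g ts, t = Tm.fn g ts ∧ g ∈ S)
    (hno : ∀ t ∈ zs, ∀ f ts, t = Tm.fn f ts → f ∈ cformFuns Cc → ¬ isU t)
    (hcoh : Coh I v zs isU a zs) :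
    (Hb0.absF S v).holds I a := by
  classical
  set b : ℕ → Tm := (fun _ => Tm.var 0) with hb
  have hKCb : (cformFml Cb).holds (KI I v zs a) b := by
    rw [cformFml_holds_iff]
    intro C hC
    obtain ⟨Dc, hDc, σ, rfl⟩ := hCb C hC
    have hD := (cformFml_holds_iff I _ Cc).mp (hCc (fun x => evA I v zs a (σ x))) Dc hDc
    rw [clauseFml_holds_iff] at hD ⊢
    obtain ⟨l, hl, hlh⟩ := hD
    refine ⟨litSub σ l, List.mem_map_of_mem hl, ?_⟩
    obtain ⟨pol, p, us⟩ := l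
    have hgr : ∀ u ∈ us, Tm.vars (Tm.applySub σ u) = [] := by
      intro u hu
      exact hCbG _ hC (litSub σ (pol, p, us)) (List.mem_map_of_mem hl) _
        (List.mem_map_of_mem hu)
    have hfuns : ∀ u ∈ us, ∀ f ∈ Tm.funs u, f ∈ cformFuns Cc := by
      intro u hu f hf
      exact ⟨Dc, hDc, (pol, p, us), hl, u, hu, hf⟩
    have key : ((us.map (Tm.applySub σ)).map (Tm.eval (KI I v zs a) b)).map (evA I v zs a)
        = us.map (Tm.eval I (fun x => evA I v zs a (σ x))) := by
      rw [List.map_map, List.map_map]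
      apply List.map_congr_left
      intro u hu
      simp only [Function.comp]
      rw [eval_KI_ground I v zs a b _ (hgr u hu)]
      exact evA_applySub I v zs isU (cformFuns Cc) a σ hcoh hno u (hfuns u hu)
    cases pol
    · -- negative literal
      show ¬ (KI I v zs a).pr p ((litSub σ (false, p, us)).2.2.map (Tm.eval (KI I v zs a) b))
      simp only [litSub]
      show ¬ I.pr p _
      rw [key]
      simpa [litFml] using hlh
    · -- positive literal
      show (KI I v zs a).pr p ((litSub σ (true, p, us)).2.2.map (Tm.eval (KI I v zs a) b))
      simp only [litSub]
      show I.pr p _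
      rw [key]
      simpa [litFml] using hlh
  have hKHb : Hb0.holds (KI I v zs a) b := hEnt Tm ⟨Tm.var 0⟩ (KI I v zs a) b hKCb
  exact (holds_absF_iff I v zs S a b hheads Hb0 hGr
    (fun w hw u hu => hzs0 u ⟨w, hw, hu⟩)).mpr hKHb

end Mega2

end CTI

namespace CTI

theorem pfx_nil (isU : Tm → Prop) (v : Tm → ℕ) (X : Fml) : pfx isU v [] X = X := rfl

open Classical in
theorem pfx_cons (isU : Tm → Prop) (v : Tm → ℕ) (t : Tm) (zs : List Tm) (X : Fml) :
    pfx isU v (t :: zs) X =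
      if isU t then Fml.all (v t) (pfx isU v zs X) else Fml.ex (v t) (pfx isU v zs X) := rfl

section Mega3

variable {D : Type} (I : Interp D) (v : Tm → ℕ) (zs : List Tm)

theorem mega (S : Set ℕ) (isU : Tm → Prop) (Cc Cb : CForm) (Hb0 : Fml)
    (hCc : ∀ b' : ℕ → D, (cformFml Cc).holds I b')
    (hCb : ∀ C ∈ Cb, ∃ Dc ∈ Cc, instClause C Dc)
    (hCbG : ∀ C ∈ Cb, ∀ l ∈ C, ∀ t ∈ l.2.2, Tm.vars t = [])
    (hEnt : Entails (cformFml Cb) Hb0)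
    (hGr : Hb0.isGround)
    (hzs0 : ∀ u, u ∈ Hb0.topTerms S → u ∈ zs)
    (hheads : ∀ t ∈ zs, ∃ g ts, t = Tm.fn g ts ∧ g ∈ S)
    (hno : ∀ t ∈ zs, ∀ f ts, t = Tm.fn f ts → f ∈ cformFuns Cc → ¬ isU t)
    (hnd : zs.Nodup)
    (hvinj : ∀ t ∈ zs, ∀ u ∈ zs, v t = v u → t = u)
    (hzsg : ∀ t ∈ zs, Tm.vars t = [])
    (hord : ∀ (i j : ℕ) (hi : i < zs.length) (hj : j < zs.length),
      StrictSubt (zs.get ⟨i, hi⟩) (zs.get ⟨j, hj⟩) → i < j) :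
    ∀ a : ℕ → D, (pfx isU v zs (Hb0.absF S v)).holds I a := by
  classical
  suffices h : ∀ suf pre, zs = pre ++ suf → ∀ a, Coh I v zs isU a pre →
      (pfx isU v suf (Hb0.absF S v)).holds I a by
    intro a
    exact h zs [] rfl a (fun t ht => absurd ht List.not_mem_nil)
  intro suf
  induction suf with
  | nil =>
      intro pre hpre a hcoh
      rw [List.append_nil] at hpre
      subst hpre
      rw [pfx_nil]
      exact claimA I v zs S isU Cc Cb Hb0 a hCc hCb hCbG hEnt hGr hzs0 hheads hno hcoh
  | cons t suf ih =>
      intro pre hpre a hcoh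
      have htz : t ∈ zs := by rw [hpre]; simp
      have htnp : t ∉ pre := by
        have hnd' : (pre ++ t :: suf).Nodup := hpre ▸ hnd
        rcases List.nodup_append'.mp hnd' with ⟨-, -, hdisj⟩
        intro hmem
        exact hdisj hmem List.mem_cons_self
      have hnotsub : ∀ t' ∈ pre ++ [t], ¬ StrictSubt t t' := by
        intro t' ht' hst
        rcases List.mem_append.mp ht' with ht'p | ht'p
        · obtain ⟨i, hi, hpi⟩ := List.mem_iff_getElem.mp ht'p
          subst hpre
          have hiz : i < (pre ++ t :: suf).length := by
            simp only [List.length_append, List.length_cons]; omega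
          have hlz : pre.length < (pre ++ t :: suf).length := by
            simp only [List.length_append, List.length_cons]; omega
          have e1 : (pre ++ t :: suf).get ⟨i, hiz⟩ = t' := by
            rw [List.get_eq_getElem, List.getElem_append_left hi]
            exact hpi
          have e2 : (pre ++ t :: suf).get ⟨pre.length, hlz⟩ = t := by
            rw [List.get_eq_getElem, List.getElem_append_right (le_refl pre.length)]
            simp
          have := hord pre.length i hlz hiz (by rw [e1, e2]; exact hst)
          omega
        · simp only [List.mem_singleton] at ht'p
          subst ht'p
          exact hst.2 rfl
      have hkey : ∀ (d : D), ∀ t' ∈ pre ++ [t], ∀ f' ts', t' = Tm.fn f' ts' →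
          ∀ s ∈ ts', evA I v zs (Function.update a (v t) d) s = evA I v zs a s := by
        intro d t' ht' f' ts' ht'eq s hs
        have ht'z : t' ∈ zs := by
          rw [hpre]
          rcases List.mem_append.mp ht' with h | h
          · exact List.mem_append.mpr (Or.inl h)
          · simp only [List.mem_singleton] at h
            subst h
            simp
        apply evA_congr
        · intro x hx
          have hg : Tm.vars s = [] := by
            have := hzsg t' ht'z
            rw [ht'eq] at this
            exact ground_args this s hs
          rw [hg] at hx
          simp at hx
        · intro u hu hsub
          have hut : u ≠ t := by
            rintro rfl
            have hst : StrictSubt u t' := by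
              rw [ht'eq]
              exact strictSubt_of_mem_arg hsub hs
            exact hnotsub t' ht' hst
          have hvne : v u ≠ v t := fun h => hut (hvinj u hu t htz h)
          rw [Function.update_of_ne hvne]
      obtain ⟨f, ts, heq, hfS⟩ := hheads t htz
      have hcoh' : ∀ d : D, (¬ isU t → d = I.fn f (ts.map (evA I v zs a))) →
          Coh I v zs isU (Function.update a (v t) d) (pre ++ [t]) := by
        intro d hd t' ht' hnu f' ts' heq'
        rcases List.mem_append.mp ht' with hmem | hmem
        · have ht'ne : t' ≠ t := fun h => htnp (h ▸ hmem)
          have hvne : v t' ≠ v t := fun h =>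
            ht'ne (hvinj t' (by rw [hpre]; exact List.mem_append.mpr (Or.inl hmem)) t htz h)
          rw [Function.update_of_ne hvne]
          rw [hcoh t' hmem hnu f' ts' heq']
          congr 1
          exact (List.map_congr_left
            (fun s hs => hkey d t' (List.mem_append.mpr (Or.inl hmem)) f' ts' heq' s hs)).symm
        · simp only [List.mem_singleton] at hmem
          subst hmem
          rw [heq] at heq'
          injection heq' with h1 h2
          subst h1
          subst h2
          rw [Function.update_self]
          refine (hd hnu).trans ?_
          congr 1
          exact (List.map_congr_left
            (fun s hs => hkey d t' ht' f ts heq s hs)).symm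
      have hpre' : zs = (pre ++ [t]) ++ suf := by rw [hpre]; simp
      rw [pfx_cons]
      by_cases hU : isU t
      · rw [if_pos hU]
        intro d
        exact ih (pre ++ [t]) hpre' (Function.update a (v t) d)
          (hcoh' d (fun h => absurd hU h))
      · rw [if_neg hU]
        exact ⟨I.fn f (ts.map (evA I v zs a)),
          ih (pre ++ [t]) hpre' _ (hcoh' _ (fun _ => rfl))⟩

end Mega3

end CTI

namespace CTI

theorem pfx_neg {D : Type} (I : Interp D) (v : Tm → ℕ) (isU : Tm → Prop) :
    ∀ (zs : List Tm) (X : Fml) (a : ℕ → D),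
      (pfx (fun t => ¬ isU t) v zs (.neg X)).holds I a →
        ¬ (pfx isU v zs X).holds I a := by
  classical
  intro zs
  induction zs with
  | nil => intro X a h; exact h
  | cons t zs ih =>
      intro X a h hcon
      rw [pfx_cons] at h hcon
      by_cases hU : isU t
      · rw [if_neg (not_not_intro hU)] at h
        rw [if_pos hU] at hcon
        simp only [holds_ex] at h
        simp only [holds_all] at hcon
        obtain ⟨d, hd⟩ := h
        exact ih X _ hd (hcon d)
      · rw [if_pos hU] at h
        rw [if_neg hU] at hcon
        simp only [holds_all] at h
        simp only [holds_ex] at hcon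
        obtain ⟨d, hd⟩ := hcon
        exact ih X _ (h d) hd

end CTI

namespace CTI

/-- Correctness of the CTI method with interpolant lifting. -/
theorem cti_lifting_correct (F G : Fml) (hsF : F.fv = ∅) (hsG : G.fv = ∅)
    (hFG : Entails F G)
    (Fc Gc : CForm) (fc gc : Set ℕ)
    (hdisj : fc ∩ gc = ∅)
    (hfcG : ∀ s ∈ fc, s ∉ G.funs) (hfcGc : ∀ s ∈ fc, s ∉ cformFuns Gc)
    (hfcF : ∀ s ∈ fc, s ∉ F.funs)
    (hgcF : ∀ s ∈ gc, s ∉ F.funs) (hgcFc : ∀ s ∈ gc, s ∉ cformFuns Fc)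
    (hgcG : ∀ s ∈ gc, s ∉ G.funs)
    (hfunF : cformFuns Fc ⊆ F.funs ∪ fc)
    (hfunG : cformFuns Gc ⊆ G.funs ∪ gc)
    (hpredF : (cformFml Fc).preds ⊆ F.preds)
    (hpredG : (Fml.neg (cformFml Gc)).preds ⊆ G.preds)
    (heqvF : ∀ (D : Type) (_ : Nonempty D) (I : Interp D),
        (∀ a : ℕ → D, F.holds I a) ↔
          ∃ I' : Interp D, AgreeExcept fc ∅ I I' ∧ ∀ a : ℕ → D, (cformFml Fc).holds I' a)
    (heqvG : ∀ (D : Type) (_ : Nonempty D) (I : Interp D),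
        (∀ a : ℕ → D, (Fml.neg G).holds I a) ↔
          ∃ I' : Interp D, AgreeExcept gc ∅ I I' ∧ ∀ a : ℕ → D, (cformFml Gc).holds I' a)
    (k : ℕ) (hkF : k ∉ F.funs) (hkG : k ∉ G.funs)
    (hkFc : k ∉ cformFuns Fc) (hkGc : k ∉ cformFuns Gc)
    (Fb Gb : CForm)
    (hFb : ∀ C ∈ Fb, ∃ D ∈ Fc, instClause C D)
    (hGb : ∀ C ∈ Gb, ∃ D ∈ Gc, instClause C D)
    (hFbT : ∀ C ∈ Fb, ∀ l ∈ C, ∀ t ∈ l.2.2,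
      Tm.builtFrom (cformFuns Fc ∪ cformFuns Gc) {k} t)
    (hGbT : ∀ C ∈ Gb, ∀ l ∈ C, ∀ t ∈ l.2.2,
      Tm.builtFrom (cformFuns Fc ∪ cformFuns Gc) {k} t)
    (Hb : Fml) (hHbg : Hb.isGround)
    (h1 : Entails (cformFml Fb) Hb)
    (h2 : Entails Hb (.neg (cformFml Gb)))
    (h3 : Fml.lits Hb ⊆ Fml.lits (cformFml Fb) ∩ Fml.lits (.neg (cformFml Gb)))
    (v : Tm → ℕ)
    (hvinj : ∀ t ∈ Hb.topTerms (fSet Fc Gc ∪ gSet Fc Gc k),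
             ∀ u ∈ Hb.topTerms (fSet Fc Gc ∪ gSet Fc Gc k), v t = v u → t = u)
    (zs : List Tm) (hnd : zs.Nodup)
    (hzs : ∀ t : Tm, t ∈ zs ↔ t ∈ Hb.topTerms (fSet Fc Gc ∪ gSet Fc Gc k))
    (hord : ∀ (i j : ℕ) (hi : i < zs.length) (hj : j < zs.length),
      StrictSubt (zs.get ⟨i, hi⟩) (zs.get ⟨j, hj⟩) → i < j) :
    CraigLyndon F G
      (mkPrefix (gSet Fc Gc k) v zs (Hb.absF (fSet Fc Gc ∪ gSet Fc Gc k) v)) := by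
  classical
  have hkgS : k ∈ gSet Fc Gc k := Set.mem_union_right _ rfl
  have hheads : ∀ t ∈ zs, ∃ g ts, t = Tm.fn g ts ∧ g ∈ (fSet Fc Gc ∪ gSet Fc Gc k) := by
    intro t ht
    obtain ⟨w, hw, htop⟩ := (hzs t).mp ht
    exact topSym_shape htop
  have hzsg : ∀ t ∈ zs, Tm.vars t = [] := by
    intro t ht
    obtain ⟨w, hw, htop⟩ := (hzs t).mp ht
    exact subt_ground (topSym_subt htop) (ground_pargs Hb hHbg w hw)
  have hvinj' : ∀ t ∈ zs, ∀ u ∈ zs, v t = v u → t = u :=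
    fun t ht u hu => hvinj t ((hzs t).mp ht) u ((hzs u).mp hu)
  have hFbG : ∀ C ∈ Fb, ∀ l ∈ C, ∀ t ∈ l.2.2, Tm.vars t = [] :=
    fun C hC l hl t ht => builtFrom_ground (hFbT C hC l hl t ht)
  have hGbG : ∀ C ∈ Gb, ∀ l ∈ C, ∀ t ∈ l.2.2, Tm.vars t = [] :=
    fun C hC l hl t ht => builtFrom_ground (hGbT C hC l hl t ht)
  have hgS_elim : ∀ f : ℕ, f ∈ gSet Fc Gc k →
      (f ∈ cformFuns Gc ∧ f ∉ cformFuns Fc) ∨ f = k := by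
    intro f hf
    rcases hf with h | h
    · exact Or.inl h
    · exact Or.inr h
  have hno_F : ∀ t ∈ zs, ∀ f ts, t = Tm.fn f ts → f ∈ cformFuns Fc →
      ¬ isGTm (gSet Fc Gc k) t := by
    intro t ht f ts heq hfFc hg
    obtain ⟨h, ts', heq', hmem⟩ := hg
    rw [heq] at heq'
    injection heq' with e1 e2
    subst e1
    rcases hgS_elim f hmem with ⟨-, hnot⟩ | rfl
    · exact hnot hfFc
    · exact hkFc hfFc
  have hno_G : ∀ t ∈ zs, ∀ f ts, t = Tm.fn f ts → f ∈ cformFuns Gc →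
      ¬ ¬ isGTm (gSet Fc Gc k) t := by
    intro t ht f ts heq hfGc hnn
    apply hnn
    obtain ⟨g, ts', heq', hgS⟩ := hheads t ht
    rw [heq] at heq'
    injection heq' with e1 e2
    subst e1
    refine ⟨f, ts, heq, ?_⟩
    rcases hgS with hfS | hgSm
    · exact absurd hfGc hfS.2
    · exact hgSm
  have hHbfuns : ∀ w ∈ Hb.pargs, ∀ f ∈ Tm.funs w,
      f ∈ cformFuns Fc ∨ f ∈ cformFuns Gc ∨ f = k := by
    intro w hw f hf
    obtain ⟨bp, hbp, hwbp⟩ := pargs_lits Hb true w hw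
    have hbpF := (h3 hbp).1
    rw [Fml.lits, lits_cform] at hbpF
    obtain ⟨C, hC, l, hl, hbpe⟩ := hbpF
    have hw2 : w ∈ l.2.2 := by rw [hbpe] at hwbp; exact hwbp
    rcases builtFrom_funs (hFbT C hC l hl w hw2) f hf with h | h
    · rcases h with h | h
      · exact Or.inl h
      · exact Or.inr (Or.inl h)
    · exact Or.inr (Or.inr h)
  -- the function symbols of the interpolant
  have hfunsH : ∀ f ∈ (mkPrefix (gSet Fc Gc k) v zs
      (Hb.absF (fSet Fc Gc ∪ gSet Fc Gc k) v)).funs, f ∈ F.funs ∧ f ∈ G.funs := by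
    intro f hf
    rw [mkPrefix_eq_pfx, funs_pfx] at hf
    obtain ⟨w, hw, hfw⟩ := funs_absF _ f hf
    obtain ⟨hfin, hfS⟩ := funs_absTm w f hfw
    have hfnk : f ≠ k := fun e => hfS (by subst e; exact Set.mem_union_right _ hkgS)
    have hFcGc : f ∈ cformFuns Fc ∧ f ∈ cformFuns Gc := by
      rcases hHbfuns w hw f hfin with h | h | h
      · refine ⟨h, ?_⟩
        by_contra hng
        exact hfS (Set.mem_union_left _ ⟨h, hng⟩)
      · refine ⟨?_, h⟩
        by_contra hnf
        exact hfS (Set.mem_union_right _ (Set.mem_union_left _ ⟨h, hnf⟩))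
      · exact absurd h hfnk
    constructor
    · rcases hfunF hFcGc.1 with h | h
      · exact h
      · exact absurd hFcGc.2 (hfcGc f h)
    · rcases hfunG hFcGc.2 with h | h
      · exact h
      · exact absurd hFcGc.1 (hgcFc f h)
  -- free variables
  have hfv : (mkPrefix (gSet Fc Gc k) v zs
      (Hb.absF (fSet Fc Gc ∪ gSet Fc Gc k) v)).fv = ∅ := by
    ext x
    simp only [Set.mem_empty_iff_false, iff_false]
    intro hx
    rw [mkPrefix_eq_pfx] at hx
    obtain ⟨hx1, hx2⟩ := fv_pfx _ _ _ x hx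
    obtain ⟨w, hw, hxw⟩ := fv_absF _ x hx1
    rcases vars_absTm w x hxw with h | ⟨u, hu, rfl⟩
    · rw [ground_pargs Hb hHbg w hw] at h
      simp at h
    · exact hx2 u ((hzs u).mpr ⟨w, hw, hu⟩) rfl
  -- predicates
  have hpreds : (mkPrefix (gSet Fc Gc k) v zs
      (Hb.absF (fSet Fc Gc ∪ gSet Fc Gc k) v)).preds ⊆ F.preds ∩ G.preds := by
    rintro ⟨b, p⟩ ⟨ts', hts'⟩
    rw [Fml.lits, mkPrefix_eq_pfx, litsP_pfx] at hts'
    obtain ⟨ts, hts, -⟩ := litsP_absF _ true _ hts'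
    have h3' := h3 hts
    constructor
    · have hbF := h3'.1
      rw [Fml.lits, lits_cform] at hbF
      obtain ⟨C, hC, l, hl, hbe⟩ := hbF
      obtain ⟨Dc, hDc, σ, rfl⟩ := hFb C hC
      obtain ⟨l0, hl0, rfl⟩ := List.mem_map.mp hl
      obtain ⟨pol, q, us⟩ := l0
      simp only [litSub, Prod.mk.injEq] at hbe
      obtain ⟨hb1, hb2, -⟩ := hbe
      apply hpredF
      refine ⟨us, ?_⟩
      show (b, p, us) ∈ Fml.litsP true (cformFml Fc)
      rw [lits_cform]
      refine ⟨Dc, hDc, (pol, q, us), hl0, ?_⟩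
      simp only [Prod.mk.injEq]
      exact ⟨hb1, hb2, trivial⟩
    · have hbG := h3'.2
      have hbG' : (b, p, ts) ∈ Fml.litsP false (cformFml Gb) := hbG
      rw [lits_cform] at hbG'
      obtain ⟨C, hC, l, hl, hbe⟩ := hbG'
      obtain ⟨Dc, hDc, σ, rfl⟩ := hGb C hC
      obtain ⟨l0, hl0, rfl⟩ := List.mem_map.mp hl
      obtain ⟨pol, q, us⟩ := l0
      simp only [litSub, Prod.mk.injEq] at hbe
      obtain ⟨hb1, hb2, -⟩ := hbe
      apply hpredG
      refine ⟨us, ?_⟩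
      show (b, p, us) ∈ Fml.litsP false (cformFml Gc)
      rw [lits_cform]
      refine ⟨Dc, hDc, (pol, q, us), hl0, ?_⟩
      simp only [Prod.mk.injEq]
      exact ⟨hb1, hb2, trivial⟩
  -- F entails H
  have hFH : Entails F (mkPrefix (gSet Fc Gc k) v zs
      (Hb.absF (fSet Fc Gc ∪ gSet Fc Gc k) v)) := by
    intro Dom hne I a hF
    have hFall : ∀ a', F.holds I a' := by
      intro a'
      refine (holds_fv_congr I F a a' ?_).mp hF
      intro x hx
      rw [hsF] at hx
      exact absurd hx (Set.notMem_empty x)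
    obtain ⟨I', ⟨hfn, hpr⟩, hFc⟩ := (heqvF Dom hne I).mp hFall
    have hH' := mega I' v zs (fSet Fc Gc ∪ gSet Fc Gc k) (isGTm (gSet Fc Gc k)) Fc Fb Hb
      hFc hFb hFbG h1 hHbg (fun u hu => (hzs u).mpr hu) hheads hno_F hnd hvinj' hzsg hord a
    rw [mkPrefix_eq_pfx]
    refine (holds_interp_congr (fun p => hpr p (Set.notMem_empty p)) _ a ?_).mpr hH'
    intro f hf
    have hfG : f ∈ G.funs := (hfunsH f (by rw [mkPrefix_eq_pfx]; exact hf)).2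
    exact hfn f (fun hfc => hfcG f hfc hfG)
  -- H entails G
  have hHG : Entails (mkPrefix (gSet Fc Gc k) v zs
      (Hb.absF (fSet Fc Gc ∪ gSet Fc Gc k) v)) G := by
    intro Dom hne I a hH
    by_contra hgG
    have hnGall : ∀ a', (Fml.neg G).holds I a' := by
      intro a'
      refine (holds_fv_congr I (.neg G) a a' ?_).mp hgG
      intro x hx
      have hx' : x ∈ G.fv := hx
      rw [hsG] at hx'
      exact absurd hx' (Set.notMem_empty x)
    obtain ⟨I'', ⟨hfn, hpr⟩, hGc⟩ := (heqvG Dom hne I).mp hnGall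
    have hEnt' : Entails (cformFml Gb) (Fml.neg Hb) := by
      intro D' n J b hb hHbh
      exact h2 D' n J b hHbh hb
    have hmir := mega I'' v zs (fSet Fc Gc ∪ gSet Fc Gc k)
      (fun t => ¬ isGTm (gSet Fc Gc k) t) Gc Gb (.neg Hb)
      hGc hGb hGbG hEnt' hHbg (fun u hu => (hzs u).mpr hu) hheads hno_G hnd hvinj' hzsg hord a
    have hnH := pfx_neg I'' v (isGTm (gSet Fc Gc k)) zs
      (Hb.absF (fSet Fc Gc ∪ gSet Fc Gc k) v) a hmir
    apply hnH
    rw [mkPrefix_eq_pfx] at hH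
    refine (holds_interp_congr (fun p => hpr p (Set.notMem_empty p)) _ a ?_).mp hH
    intro f hf
    have hfF : f ∈ F.funs := (hfunsH f (by rw [mkPrefix_eq_pfx]; exact hf)).1
    exact hfn f (fun hgc => hgcF f hgc hfF)
  exact ⟨hfv, hFH, hHG, hpreds, fun f hf => ⟨(hfunsH f hf).1, (hfunsH f hf).2⟩⟩

end CTI
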